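/- Let α ∈ (1,2) and for integers k, n ≥ 1 and reals s, u > 0 define m_{k,n}(s,u) = Γ(k/α + n)·s^k·u^n / (π·k!·Γ(αn)). If n ≤ (2 − 1/α)·(k+1), then m_{k+1,n}(s,u) < 2s·m_{k,n}(s,u)/(k+1)^(1 − 1/α). -/

import Mathlib

open Real

lemma gamma_add_le (x t : ℝ) (hx : 0 < x) (ht : 0 < t) (ht1 : t < 1) :
    Real.Gamma (x + t) ≤ Real.Gamma x * x ^ t := by
  have h := Real.convexOn_log_Gamma.2 (Set.mem_Ioi.mpr hx)
    (Set.mem_Ioi.mpr (by linarith : (0:ℝ) < x + 1))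
    (by linarith : (0:ℝ) ≤ 1 - t) ht.le (by ring)
  simp only [smul_eq_mul, Function.comp_apply] at h
  have hxg : 0 < Real.Gamma x := Real.Gamma_pos_of_pos hx
  have hxg1 : 0 < Real.Gamma (x + 1) := Real.Gamma_pos_of_pos (by linarith)
  have hxt : 0 < Real.Gamma (x + t) := Real.Gamma_pos_of_pos (by linarith)
  have h1 : (1 - t) * x + t * (x + 1) = x + t := by ring
  rw [h1] at h
  have h2 : Real.Gamma (x + 1) = x * Real.Gamma x := Real.Gamma_add_one hx.ne'
  rw [h2, Real.log_mul hx.ne' hxg.ne'] at h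
  have h3 : (1 - t) * Real.log (Real.Gamma x) + t * (Real.log x + Real.log (Real.Gamma x))
      = Real.log (Real.Gamma x) + t * Real.log x := by ring
  rw [h3] at h
  calc Real.Gamma (x + t) = Real.exp (Real.log (Real.Gamma (x + t))) := (Real.exp_log hxt).symm
    _ ≤ Real.exp (Real.log (Real.Gamma x) + t * Real.log x) := Real.exp_le_exp.mpr h
    _ = Real.Gamma x * x ^ t := by
        rw [Real.exp_add, Real.exp_log hxg, ← Real.exp_log hx, ← Real.exp_mul,
          Real.exp_log hx]
        ring_nf

theorem stmt_4 (α s u : ℝ) (hα : 1 < α ∧ α < 2) (hs : 0 < s) (hu : 0 < u)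
    (m : ℕ → ℕ → ℝ)
    (hm : ∀ k n : ℕ, m k n =
      Real.Gamma ((k : ℝ)/α + n) * s^k * u^n /
        (Real.pi * (Nat.factorial k) * Real.Gamma (α * n)))
    (k n : ℕ) (hk : 1 ≤ k) (hn : 1 ≤ n)
    (hkn : (n : ℝ) ≤ (2 - 1/α) * ((k : ℝ) + 1)) :
    m (k+1) n < 2 * s * m k n / ((k : ℝ) + 1) ^ (1 - 1/α) := by
  obtain ⟨hα1, hα2⟩ := hα
  have hαpos : (0:ℝ) < α := by linarith
  obtain ⟨t, htdef⟩ : ∃ t : ℝ, t = 1/α := ⟨_, rfl⟩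
  have ht0 : 0 < t := by rw [htdef]; positivity
  have ht1 : t < 1 := by rw [htdef, div_lt_one hαpos]; linarith
  have hnpos : (0:ℝ) < n := by exact_mod_cast hn
  obtain ⟨x, hxdef⟩ : ∃ x : ℝ, x = (k:ℝ)/α + n := ⟨_, rfl⟩
  have hx0 : 0 < x := by rw [hxdef]; positivity
  have hk1 : (0:ℝ) < (k:ℝ) + 1 := by positivity
  -- x < 2 (k+1)
  have hx2 : x < 2 * ((k:ℝ) + 1) := by
    have : x ≤ (k:ℝ)/α + (2 - 1/α) * ((k:ℝ) + 1) := by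
      rw [hxdef]; linarith
    have h2 : (k:ℝ)/α + (2 - 1/α) * ((k:ℝ) + 1) = 2 * ((k:ℝ)+1) - 1/α := by
      field_simp; ring
    rw [h2] at this
    have h1α : (0:ℝ) < 1/α := by positivity
    linarith
  have hgam := gamma_add_le x t hx0 ht0 ht1
  have hxt : x ^ t < 2 * ((k:ℝ) + 1) ^ t := by
    calc x ^ t < (2 * ((k:ℝ)+1)) ^ t := by
          exact Real.rpow_lt_rpow hx0.le hx2 ht0
      _ = 2 ^ t * ((k:ℝ)+1) ^ t := Real.mul_rpow (by norm_num) hk1.le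
      _ < 2 * ((k:ℝ)+1) ^ t := by
          have : (2:ℝ) ^ t < 2 ^ (1:ℝ) :=
            Real.rpow_lt_rpow_left_iff (by norm_num) |>.mpr ht1
          rw [Real.rpow_one] at this
          have hp : (0:ℝ) < ((k:ℝ)+1) ^ t := Real.rpow_pos_of_pos hk1 t
          nlinarith
  -- positivity facts
  have hgx : 0 < Real.Gamma x := Real.Gamma_pos_of_pos hx0
  have hga : 0 < Real.Gamma (α * n) := Real.Gamma_pos_of_pos (by positivity)
  have hpi : (0:ℝ) < Real.pi := Real.pi_pos
  have hfac : (0:ℝ) < (Nat.factorial k : ℝ) := by exact_mod_cast Nat.factorial_pos k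
  -- rewrite m
  rw [hm, hm]
  have hxeq : ((k+1 : ℕ) : ℝ)/α + n = x + t := by
    rw [hxdef, htdef]; push_cast; ring
  rw [hxeq]
  have hfac1 : ((Nat.factorial (k+1) : ℕ) : ℝ) = ((k:ℝ)+1) * (Nat.factorial k : ℝ) := by
    rw [Nat.factorial_succ]; push_cast; ring
  rw [hfac1]
  have hkp : (0:ℝ) < ((k:ℝ)+1) ^ (1 - 1/α) := Real.rpow_pos_of_pos hk1 _
  rw [div_lt_div_iff₀ (by positivity) (by positivity)]
  have key : Real.Gamma (x + t) * ((k:ℝ)+1) ^ (1 - 1/α)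
      < Real.Gamma x * (2 * ((k:ℝ)+1)) := by
    calc Real.Gamma (x + t) * ((k:ℝ)+1) ^ (1 - 1/α)
        ≤ Real.Gamma x * x ^ t * ((k:ℝ)+1) ^ (1 - 1/α) := by
          exact mul_le_mul_of_nonneg_right hgam hkp.le
      _ < Real.Gamma x * (2 * ((k:ℝ)+1) ^ t) * ((k:ℝ)+1) ^ (1 - 1/α) := by
          apply mul_lt_mul_of_pos_right _ hkp
          exact mul_lt_mul_of_pos_left hxt hgx
      _ = Real.Gamma x * (2 * ((k:ℝ)+1)) := by
          have hre : ((k:ℝ)+1) ^ t * ((k:ℝ)+1) ^ (1 - 1/α) = ((k:ℝ)+1) := by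
            rw [← Real.rpow_add hk1, show t + (1 - 1/α) = 1 by rw [htdef]; ring,
              Real.rpow_one]
          rw [mul_assoc, mul_assoc, hre]
  rw [← hxdef]
  have hRHS : 2*s*(Real.Gamma x * s^k*u^n/(Real.pi*(Nat.factorial k : ℝ)*Real.Gamma (α*n)))
      * (Real.pi*(((k:ℝ)+1)*(Nat.factorial k : ℝ))*Real.Gamma (α*n))
      = 2*s*Real.Gamma x*s^k*u^n*((k:ℝ)+1) := by
    field_simp
  rw [hRHS]
  have hpos : 0 < s^(k+1) * u^n := by positivity
  calc Real.Gamma (x+t) * s^(k+1) * u^n * ((k:ℝ)+1)^(1-1/α)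
      = (Real.Gamma (x+t) * ((k:ℝ)+1)^(1-1/α)) * (s^(k+1) * u^n) := by ring
    _ < (Real.Gamma x * (2*((k:ℝ)+1))) * (s^(k+1)*u^n) := mul_lt_mul_of_pos_right key hpos
    _ = 2*s*Real.Gamma x*s^k*u^n*((k:ℝ)+1) := by rw [pow_succ]; ring
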